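/- Let P be a Markov transition kernel on a Polish metric space (X, ψ, B) satisfying (B1), (B2), and (B3) (with a function Λ: X × X → [0,∞) such that Λ(x,y) ≥ (PV(x) + PV(y) + 1)/(V(x) + V(y) + 1) for all (x,y)). Then P has at most one stationary distribution, i.e., there is at most one probability measure π on X with πP = π. -/

import Mathlib

open MeasureTheory ProbabilityTheory ENNReal Filter

/-- A coupling of two measures: a measure on the product with the given marginals. -/
def IsCoupling {X : Type*} [MeasurableSpace X] (υ : Measure (X × X)) (μ ν : Measure X) : Prop :=
  υ.map Prod.fst = μ ∧ υ.map Prod.snd = ν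

/-- The `L₁`-Wasserstein divergence `W_ψ` induced by the metric `ψ = dist` of `X`. -/
noncomputable def wassDist {X : Type*} [MeasurableSpace X] [PseudoMetricSpace X]
    (μ ν : Measure X) : ℝ≥0∞ :=
  ⨅ (υ : Measure (X × X)) (_ : IsProbabilityMeasure υ) (_ : IsCoupling υ μ ν),
    ∫⁻ p, ENNReal.ofReal (dist p.1 p.2) ∂υ

/-- The `n`-step evolution `μ Pⁿ` of a measure under a Markov transition kernel. -/
noncomputable def stepN {X : Type*} [MeasurableSpace X] (P : Kernel X X) :
    ℕ → Measure X → Measure X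
  | 0, μ => μ
  | n + 1, μ => (stepN P n μ).bind (fun x => P x)

/-- Membership in `P_ψ(X)`: `∫ ψ(x,·) dμ < ∞` for some `x`. -/
def memPpsi {X : Type*} [MeasurableSpace X] [PseudoMetricSpace X] (μ : Measure X) : Prop :=
  ∃ x : X, ∫⁻ y, ENNReal.ofReal (dist x y) ∂μ < ⊤

section Aux

variable {X : Type*} [MeasurableSpace X]

lemma isCoupling_prod (μ ν : Measure X) [IsProbabilityMeasure μ] [IsProbabilityMeasure ν] :
    IsCoupling (μ.prod ν) μ ν := by
  constructor
  · rw [Measure.map_fst_prod]; simp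
  · rw [Measure.map_snd_prod]; simp

lemma lintegral_fst_of_isCoupling {υ : Measure (X × X)} {μ ν : Measure X}
    (h : IsCoupling υ μ ν) {f : X → ℝ≥0∞} (hf : Measurable f) :
    ∫⁻ p, f p.1 ∂υ = ∫⁻ x, f x ∂μ := by
  rw [← h.1, lintegral_map hf measurable_fst]

lemma lintegral_snd_of_isCoupling {υ : Measure (X × X)} {μ ν : Measure X}
    (h : IsCoupling υ μ ν) {f : X → ℝ≥0∞} (hf : Measurable f) :
    ∫⁻ p, f p.2 ∂υ = ∫⁻ x, f x ∂ν := by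
  rw [← h.2, lintegral_map hf measurable_snd]

lemma integrable_of_bounded {ν : Measure X} [IsProbabilityMeasure ν] {g : X → ℝ}
    (hg : Measurable g) {B : ℝ} (hB : ∀ x, |g x| ≤ B) : Integrable g ν := by
  refine (integrable_const B).mono' hg.aestronglyMeasurable ?_
  exact ae_of_all _ fun x => by simpa [Real.norm_eq_abs] using hB x

lemma integral_sub_of_isCoupling {υ : Measure (X × X)} [IsProbabilityMeasure υ] {μ ν : Measure X}
    (h : IsCoupling υ μ ν) {g : X → ℝ} (hg : Measurable g) {B : ℝ} (hB : ∀ x, |g x| ≤ B) :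
    (∫ x, g x ∂μ) - (∫ x, g x ∂ν) = ∫ p, (g p.1 - g p.2) ∂υ := by
  have h1 : Integrable (fun p : X × X => g p.1) υ := by
    refine (integrable_const B).mono' (hg.comp measurable_fst).aestronglyMeasurable ?_
    exact ae_of_all _ fun p => by simpa [Real.norm_eq_abs] using hB p.1
  have h2 : Integrable (fun p : X × X => g p.2) υ := by
    refine (integrable_const B).mono' (hg.comp measurable_snd).aestronglyMeasurable ?_
    exact ae_of_all _ fun p => by simpa [Real.norm_eq_abs] using hB p.2
  rw [integral_sub h1 h2]
  congr 1
  · rw [← h.1, integral_map measurable_fst.aemeasurable]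
    rw [h.1]; exact hg.aestronglyMeasurable
  · rw [← h.2, integral_map measurable_snd.aemeasurable]
    rw [h.2]; exact hg.aestronglyMeasurable

lemma min_le_rpow_mul {d w r : ℝ} (hd : 0 ≤ d) (hw : 1 ≤ w) (hr : 0 < r) (hr1 : r ≤ 1) :
    min d 1 ≤ d ^ r * w ^ (1 - r) := by
  have hw' : (1:ℝ) ≤ w ^ (1 - r) := Real.one_le_rpow hw (by linarith)
  have key : min d 1 ≤ d ^ r := by
    rcases le_or_gt d 1 with h | h
    · rcases eq_or_lt_of_le hd with h0 | h0
      · simp [← h0, Real.zero_rpow hr.ne']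
      · calc min d 1 ≤ d := min_le_left _ _
          _ = d ^ (1:ℝ) := (Real.rpow_one d).symm
          _ ≤ d ^ r := Real.rpow_le_rpow_of_exponent_ge h0 h hr1
    · calc min d 1 ≤ 1 := min_le_right _ _
        _ ≤ d ^ r := Real.one_le_rpow h.le hr.le
  calc min d 1 ≤ d ^ r := key
    _ = d ^ r * 1 := (mul_one _).symm
    _ ≤ d ^ r * w ^ (1 - r) := mul_le_mul_of_nonneg_left hw' (Real.rpow_nonneg hd r)

lemma min_mul_le_max_mul_min {L M d : ℝ} (hd : 0 ≤ d) :
    min (L * d) M ≤ max L M * min d 1 := by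
  rcases le_or_gt d 1 with h | h
  · rw [min_eq_left h]
    calc min (L * d) M ≤ L * d := min_le_left _ _
      _ ≤ max L M * d := mul_le_mul_of_nonneg_right (le_max_left _ _) hd
  · rw [min_eq_right h.le]
    calc min (L * d) M ≤ M := min_le_right _ _
      _ = M * 1 := (mul_one _).symm
      _ ≤ max L M * 1 := mul_le_mul_of_nonneg_right (le_max_right _ _) zero_le_one

lemma rpow_perturb {u K ε r : ℝ} (hε : 0 < ε) (hr : 0 < r) :
    ∃ δ : ℝ, 0 < δ ∧ (u + δ) ^ r * K ≤ u ^ r * K + ε := by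
  have hc : ContinuousAt (fun s : ℝ => (u + s) ^ r * K) 0 := by
    have h1 : ContinuousAt (fun x : ℝ => x ^ r) (u + 0) :=
      Real.continuousAt_rpow_const _ _ (Or.inr hr.le)
    exact (h1.comp ((continuous_const.add continuous_id).continuousAt)).mul continuousAt_const
  have hlt : (fun s : ℝ => (u + s) ^ r * K) 0 < u ^ r * K + ε := by
    simp only [add_zero]; linarith
  have hev : ∀ᶠ s in nhds (0:ℝ), (u + s) ^ r * K < u ^ r * K + ε :=
    hc.eventually_lt_const hlt
  obtain ⟨δ, hδpos, hδ⟩ := Metric.eventually_nhds_iff.mp hev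
  refine ⟨δ / 2, by linarith, ?_⟩
  have hd : dist (δ/2) (0:ℝ) < δ := by
    rw [Real.dist_eq, sub_zero, abs_of_pos (by linarith : (0:ℝ) < δ/2)]; linarith
  exact (hδ hd).le

lemma lintegral_rpow_mul_rpow_le {Y : Type*} [MeasurableSpace Y] (υ : Measure Y)
    {f g : Y → ℝ≥0∞} (hf : Measurable f) (hg : Measurable g) {r : ℝ} (hr : 0 < r) (hr1 : r < 1) :
    ∫⁻ y, f y ^ r * g y ^ (1 - r) ∂υ ≤ (∫⁻ y, f y ∂υ) ^ r * (∫⁻ y, g y ∂υ) ^ (1 - r) := by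
  have hr1' : 0 < 1 - r := by linarith
  have hpq : Real.HolderConjugate (1/r) (1/(1-r)) := by
    rw [Real.holderConjugate_iff]
    constructor
    · rw [lt_div_iff₀ hr]; linarith
    · rw [one_div, one_div, inv_inv, inv_inv]; ring
  have H := ENNReal.lintegral_mul_le_Lp_mul_Lq υ hpq
    ((hf.pow_const r).aemeasurable) ((hg.pow_const (1-r)).aemeasurable)
  simp only [Pi.mul_apply] at H
  calc ∫⁻ y, f y ^ r * g y ^ (1 - r) ∂υ
      ≤ (∫⁻ y, (f y ^ r) ^ (1/r) ∂υ) ^ (1 / (1/r)) *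
        (∫⁻ y, (g y ^ (1-r)) ^ (1/(1-r)) ∂υ) ^ (1 / (1/(1-r))) := H
    _ = (∫⁻ y, f y ∂υ) ^ r * (∫⁻ y, g y ∂υ) ^ (1 - r) := by
        simp_rw [← ENNReal.rpow_mul, mul_one_div_cancel hr.ne', mul_one_div_cancel hr1'.ne',
          ENNReal.rpow_one, one_div_one_div]

lemma isProbabilityMeasure_bind (μ : Measure X) [IsProbabilityMeasure μ]
    (P : Kernel X X) [IsMarkovKernel P] :
    IsProbabilityMeasure (μ.bind (fun x => P x)) := by
  constructor
  rw [Measure.bind_apply MeasurableSet.univ P.measurable.aemeasurable]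
  simp

lemma integral_bind_of_nonneg_bounded [Nonempty X] (μ : Measure X) [IsProbabilityMeasure μ]
    (P : Kernel X X) [IsMarkovKernel P] (g : X → ℝ) (hg : Measurable g)
    (hg0 : ∀ x, 0 ≤ g x) (B : ℝ) (hB : ∀ x, g x ≤ B) :
    ∫ x, g x ∂(μ.bind (fun x => P x)) = ∫ x, ∫ y, g y ∂(P x) ∂μ := by
  have hint : ∀ ν : Measure X, IsProbabilityMeasure ν → Integrable g ν := by
    intro ν hν
    refine (integrable_const B).mono' hg.aestronglyMeasurable ?_
    exact ae_of_all _ fun x => by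
      rw [Real.norm_eq_abs, abs_of_nonneg (hg0 x)]; exact hB x
  have hbp : IsProbabilityMeasure (μ.bind (fun x => P x)) := isProbabilityMeasure_bind μ P
  have hmea : StronglyMeasurable (fun x => ∫ y, g y ∂(P x)) :=
    StronglyMeasurable.integral_kernel_prod_right
      (f := fun _ y => g y) (hg.comp measurable_snd).stronglyMeasurable
  rw [integral_eq_lintegral_of_nonneg_ae (ae_of_all _ hg0) hg.aestronglyMeasurable,
    Measure.lintegral_bind P.measurable.aemeasurable (hg.ennreal_ofReal.aemeasurable)]
  have hinner : ∀ x, ∫⁻ y, ENNReal.ofReal (g y) ∂(P x) = ENNReal.ofReal (∫ y, g y ∂(P x)) := by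
    intro x
    rw [ofReal_integral_eq_lintegral_ofReal (hint (P x) inferInstance) (ae_of_all _ hg0)]
  simp_rw [hinner]
  rw [← ofReal_integral_eq_lintegral_ofReal, ENNReal.toReal_ofReal]
  · exact integral_nonneg fun x => integral_nonneg hg0
  · refine (integrable_const B).mono' hmea.aestronglyMeasurable ?_
    refine ae_of_all _ fun x => ?_
    rw [Real.norm_eq_abs, abs_of_nonneg (integral_nonneg hg0)]
    calc ∫ y, g y ∂(P x) ≤ ∫ _, B ∂(P x) := integral_mono (hint _ inferInstance)
          (integrable_const B) hB
      _ = B := by simp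
  · exact ae_of_all _ fun x => integral_nonneg hg0

lemma integral_bind_of_bounded [Nonempty X] (μ : Measure X) [IsProbabilityMeasure μ]
    (P : Kernel X X) [IsMarkovKernel P] (g : X → ℝ) (hg : Measurable g)
    (B : ℝ) (hB : ∀ x, |g x| ≤ B) :
    ∫ x, g x ∂(μ.bind (fun x => P x)) = ∫ x, ∫ y, g y ∂(P x) ∂μ := by
  have hB0 : 0 ≤ B := le_trans (abs_nonneg _) (hB (Classical.arbitrary X))
  set gp : X → ℝ := fun x => g x + B with hgp
  have hgp0 : ∀ x, 0 ≤ gp x := fun x => by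
    have := abs_le.mp (hB x); simp only [hgp]; linarith [this.1]
  have hgpB : ∀ x, gp x ≤ 2 * B := fun x => by
    have := abs_le.mp (hB x); simp only [hgp]; linarith [this.2]
  have hgpm : Measurable gp := hg.add_const B
  have hbp : IsProbabilityMeasure (μ.bind (fun x => P x)) := isProbabilityMeasure_bind μ P
  have hint : ∀ ν : Measure X, IsProbabilityMeasure ν → Integrable g ν := by
    intro ν hν
    refine (integrable_const B).mono' hg.aestronglyMeasurable ?_
    exact ae_of_all _ fun x => by rw [Real.norm_eq_abs]; exact hB x
  have key := integral_bind_of_nonneg_bounded μ P gp hgpm hgp0 (2*B) hgpB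
  have e1 : ∫ x, gp x ∂(μ.bind (fun x => P x)) = (∫ x, g x ∂(μ.bind (fun x => P x))) + B := by
    rw [integral_add (hint _ hbp) (integrable_const B)]; simp
  have e2 : ∀ x : X, ∫ y, gp y ∂(P x) = (∫ y, g y ∂(P x)) + B := by
    intro x
    rw [integral_add (hint _ inferInstance) (integrable_const B)]; simp
  have hmea : StronglyMeasurable (fun x => ∫ y, g y ∂(P x)) :=
    StronglyMeasurable.integral_kernel_prod_right
      (f := fun _ y => g y) (hg.comp measurable_snd).stronglyMeasurable
  have hintn : Integrable (fun x => ∫ y, g y ∂(P x)) μ := by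
    refine (integrable_const B).mono' hmea.aestronglyMeasurable ?_
    refine ae_of_all _ fun x => ?_
    rw [Real.norm_eq_abs]
    calc |∫ y, g y ∂(P x)| ≤ ∫ y, |g y| ∂(P x) := by
          simpa [Real.norm_eq_abs] using norm_integral_le_integral_norm (μ := P x) g
      _ ≤ ∫ _, B ∂(P x) := integral_mono (hint _ inferInstance).abs (integrable_const B)
          (fun y => hB y)
      _ = B := by simp
  rw [e1] at key
  simp_rw [e2] at key
  rw [integral_add hintn (integrable_const B)] at key
  simp at key
  linarith [key]

end Aux
/-- Under (B1), (B2) and (B3), the Markov transition kernel `P` has at most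
one stationary distribution. -/
theorem stmt1 {X : Type*} [MetricSpace X] [CompleteSpace X] [SecondCountableTopology X]
    [MeasurableSpace X] [BorelSpace X]
    (P : Kernel X X) [IsMarkovKernel P]
    -- (B1)
    (V : X → ℝ) (hVmeas : Measurable V) (hV0 : ∀ x, 0 ≤ V x)
    (a : ℝ) (ha : 0 < a)
    (hB1 : ∀ x y : X, a⁻¹ * dist x y ≤ V x + V y + 1)
    (hPVfin : ∀ x : X, Integrable V (P x))
    -- (B2)
    (Γ : X → X → ℝ) (hΓmeas : Measurable (Function.uncurry Γ)) (hΓ0 : ∀ x y, 0 ≤ Γ x y)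
    (hB2 : ∀ x y : X, wassDist (P x) (P y) ≤ ENNReal.ofReal (Γ x y * dist x y))
    -- the function Λ
    (Λ : X → X → ℝ) (hΛ0 : ∀ x y, 0 ≤ Λ x y)
    (hΛ : ∀ x y : X,
      ((∫ z, V z ∂(P x)) + (∫ z, V z ∂(P y)) + 1) / (V x + V y + 1) ≤ Λ x y)
    -- (B3)
    (hB3 : ∃ r ρ : ℝ, 0 < r ∧ r < 1 ∧
      IsLUB (Set.range fun p : X × X => Γ p.1 p.2 ^ r * Λ p.1 p.2 ^ (1 - r)) ρ ∧ ρ < 1) :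
    ∀ π₁ π₂ : Measure X, IsProbabilityMeasure π₁ → IsProbabilityMeasure π₂ →
      π₁.bind (fun x => P x) = π₁ → π₂.bind (fun x => P x) = π₂ → π₁ = π₂ := by
  intro π₁ π₂ hπ₁ hπ₂ hs₁ hs₂
  obtain ⟨r, ρ, hr, hr1, hlub, hρ1⟩ := hB3
  rcases isEmpty_or_nonempty X with hX | hX
  · exfalso
    have h1 := measure_univ (μ := π₁)
    rw [Set.univ_eq_empty_iff.mpr hX] at h1
    simp at h1
  -- basic quantities
  set ψt : X → X → ℝ := fun x y => dist x y ^ r * (V x + V y + 1) ^ (1 - r) with hψt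
  have hw1 : ∀ x y : X, (1:ℝ) ≤ V x + V y + 1 := fun x y => by
    have := hV0 x; have := hV0 y; linarith
  have hψt0 : ∀ x y : X, 0 ≤ ψt x y := fun x y =>
    mul_nonneg (Real.rpow_nonneg dist_nonneg r)
      (Real.rpow_nonneg (by linarith [hw1 x y]) (1 - r))
  have hψtmeas : Measurable (fun p : X × X => ψt p.1 p.2) := by
    apply Measurable.mul
    · exact measurable_dist.pow_const r
    · exact (((hVmeas.comp measurable_fst).add (hVmeas.comp measurable_snd)).add_const 1).pow_const
        (1 - r)
  have hub : ∀ x y : X, Γ x y ^ r * Λ x y ^ (1 - r) ≤ ρ := fun x y =>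
    hlub.1 ⟨(x, y), rfl⟩
  have hρ0 : 0 ≤ ρ := by
    obtain ⟨x0⟩ := hX
    exact le_trans (mul_nonneg (Real.rpow_nonneg (hΓ0 x0 x0) r)
      (Real.rpow_nonneg (hΛ0 x0 x0) (1 - r))) (hub x0 x0)
  have hmin_le : ∀ x y : X, min (dist x y) 1 ≤ ψt x y := fun x y =>
    min_le_rpow_mul dist_nonneg (hw1 x y) hr hr1.le
  -- the key coupling construction
  have key : ∀ (x y : X) (ε : ℝ), 0 < ε → ∃ υ : Measure (X × X),
      IsProbabilityMeasure υ ∧ IsCoupling υ (P x) (P y) ∧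
      ∫⁻ p, ENNReal.ofReal (ψt p.1 p.2) ∂υ ≤ ENNReal.ofReal (ρ * ψt x y + ε) := by
    intro x y ε hε
    have hu : 0 ≤ Γ x y * dist x y := mul_nonneg (hΓ0 x y) dist_nonneg
    set PVx := ∫ z, V z ∂(P x) with hPVx
    set PVy := ∫ z, V z ∂(P y) with hPVy
    have hPVx0 : 0 ≤ PVx := integral_nonneg hV0
    have hPVy0 : 0 ≤ PVy := integral_nonneg hV0
    set c₀ : ℝ := PVx + PVy + 1 with hc₀
    have hc₀1 : (1:ℝ) ≤ c₀ := by simp only [hc₀]; linarith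
    obtain ⟨δ, hδpos, hδle⟩ := rpow_perturb (u := Γ x y * dist x y) (K := c₀ ^ (1 - r))
      (ε := ε) hε hr
    have hlt : wassDist (P x) (P y) < ENNReal.ofReal (Γ x y * dist x y + δ) :=
      lt_of_le_of_lt (hB2 x y)
        ((ENNReal.ofReal_lt_ofReal_iff (by linarith)).mpr (by linarith))
    rw [wassDist] at hlt
    obtain ⟨υ, hlt⟩ := iInf_lt_iff.mp hlt
    obtain ⟨hpυ, hlt⟩ := iInf_lt_iff.mp hlt
    obtain ⟨hcυ, hlt⟩ := iInf_lt_iff.mp hlt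
    refine ⟨υ, hpυ, hcυ, ?_⟩
    haveI := hpυ
    have hVf : Measurable (fun p : X × X => ENNReal.ofReal (V p.1 + V p.2 + 1)) :=
      (((hVmeas.comp measurable_fst).add (hVmeas.comp measurable_snd)).add_const 1).ennreal_ofReal
    -- Hölder
    have hH : ∫⁻ p, ENNReal.ofReal (ψt p.1 p.2) ∂υ ≤
        (∫⁻ p, ENNReal.ofReal (dist p.1 p.2) ∂υ) ^ r *
        (∫⁻ p, ENNReal.ofReal (V p.1 + V p.2 + 1) ∂υ) ^ (1 - r) := by
      refine le_trans (le_of_eq ?_)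
        (lintegral_rpow_mul_rpow_le υ (f := fun p : X × X => ENNReal.ofReal (dist p.1 p.2))
          (g := fun p : X × X => ENNReal.ofReal (V p.1 + V p.2 + 1))
          measurable_dist.ennreal_ofReal
          (((hVmeas.comp measurable_fst).add (hVmeas.comp measurable_snd)).add_const
            1).ennreal_ofReal hr hr1)
    -- second marginal factor
      refine lintegral_congr fun p => ?_
      rw [hψt]
      rw [ENNReal.ofReal_mul (Real.rpow_nonneg dist_nonneg r),
        ENNReal.ofReal_rpow_of_nonneg dist_nonneg hr.le,
        ENNReal.ofReal_rpow_of_nonneg (by linarith [hw1 p.1 p.2]) (by linarith : (0:ℝ) ≤ 1 - r)]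
    have hsec : ∫⁻ p, ENNReal.ofReal (V p.1 + V p.2 + 1) ∂υ = ENNReal.ofReal c₀ := by
      have e : ∀ p : X × X, ENNReal.ofReal (V p.1 + V p.2 + 1) =
          ENNReal.ofReal (V p.1) + ENNReal.ofReal (V p.2) + 1 := by
        intro p
        rw [ENNReal.ofReal_add (by linarith [hV0 p.1, hV0 p.2]) zero_le_one,
          ENNReal.ofReal_add (hV0 p.1) (hV0 p.2), ENNReal.ofReal_one]
      simp_rw [e]
      rw [lintegral_add_right _ measurable_const,
        lintegral_add_left
          (show Measurable fun p : X × X => ENNReal.ofReal (V p.1) from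
            (hVmeas.comp measurable_fst).ennreal_ofReal) _]
      have m1 : ∫⁻ p : X × X, ENNReal.ofReal (V p.1) ∂υ = ENNReal.ofReal PVx := by
        rw [lintegral_fst_of_isCoupling hcυ hVmeas.ennreal_ofReal,
          ← ofReal_integral_eq_lintegral_ofReal (hPVfin x) (ae_of_all _ hV0)]
      have m2 : ∫⁻ p : X × X, ENNReal.ofReal (V p.2) ∂υ = ENNReal.ofReal PVy := by
        rw [lintegral_snd_of_isCoupling hcυ hVmeas.ennreal_ofReal,
          ← ofReal_integral_eq_lintegral_ofReal (hPVfin y) (ae_of_all _ hV0)]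
      rw [m1, m2]
      simp only [lintegral_const, measure_univ, mul_one]
      rw [hc₀, ENNReal.ofReal_add (by linarith) zero_le_one,
        ENNReal.ofReal_add hPVx0 hPVy0, ENNReal.ofReal_one]
    -- combine
    calc ∫⁻ p, ENNReal.ofReal (ψt p.1 p.2) ∂υ
        ≤ (∫⁻ p, ENNReal.ofReal (dist p.1 p.2) ∂υ) ^ r *
          (∫⁻ p, ENNReal.ofReal (V p.1 + V p.2 + 1) ∂υ) ^ (1 - r) := hH
      _ ≤ (ENNReal.ofReal (Γ x y * dist x y + δ)) ^ r * (ENNReal.ofReal c₀) ^ (1 - r) := by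
          rw [hsec]
          exact mul_le_mul_left (ENNReal.rpow_le_rpow hlt.le hr.le) _
      _ = ENNReal.ofReal ((Γ x y * dist x y + δ) ^ r * c₀ ^ (1 - r)) := by
          rw [ENNReal.ofReal_mul (Real.rpow_nonneg (by linarith) r),
            ENNReal.ofReal_rpow_of_nonneg (by linarith) hr.le,
            ENNReal.ofReal_rpow_of_nonneg (by linarith) (by linarith : (0:ℝ) ≤ 1 - r)]
      _ ≤ ENNReal.ofReal ((Γ x y * dist x y) ^ r * c₀ ^ (1 - r) + ε) :=
          ENNReal.ofReal_le_ofReal hδle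
      _ ≤ ENNReal.ofReal (ρ * ψt x y + ε) := by
          apply ENNReal.ofReal_le_ofReal
          have h1 : (Γ x y * dist x y) ^ r = Γ x y ^ r * dist x y ^ r :=
            Real.mul_rpow (hΓ0 x y) dist_nonneg
          have h2 : c₀ ≤ Λ x y * (V x + V y + 1) := by
            have hpos : (0:ℝ) < V x + V y + 1 := by linarith [hw1 x y]
            have := hΛ x y
            rw [div_le_iff₀ hpos] at this
            simpa [hc₀, hPVx, hPVy] using this
          have h3 : c₀ ^ (1 - r) ≤ (Λ x y * (V x + V y + 1)) ^ (1 - r) :=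
            Real.rpow_le_rpow (by linarith) h2 (by linarith)
          have h4 : (Λ x y * (V x + V y + 1)) ^ (1 - r) =
              Λ x y ^ (1 - r) * (V x + V y + 1) ^ (1 - r) :=
            Real.mul_rpow (hΛ0 x y) (by linarith [hw1 x y])
          have h5 : (Γ x y * dist x y) ^ r * c₀ ^ (1 - r) ≤
              (Γ x y ^ r * Λ x y ^ (1 - r)) * ψt x y := by
            rw [h1, hψt]
            calc Γ x y ^ r * dist x y ^ r * c₀ ^ (1 - r)
                ≤ Γ x y ^ r * dist x y ^ r * (Λ x y ^ (1 - r) * (V x + V y + 1) ^ (1 - r)) := by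
                  refine mul_le_mul_of_nonneg_left ?_
                    (mul_nonneg (Real.rpow_nonneg (hΓ0 x y) r)
                      (Real.rpow_nonneg dist_nonneg r))
                  rw [← h4]; exact h3
              _ = Γ x y ^ r * Λ x y ^ (1 - r) * (dist x y ^ r * (V x + V y + 1) ^ (1 - r)) := by
                  ring
          have h6 : (Γ x y ^ r * Λ x y ^ (1 - r)) * ψt x y ≤ ρ * ψt x y :=
            mul_le_mul_of_nonneg_right (hub x y) (hψt0 x y)
          linarith

  -- one-step contraction of Lipschitz constants
  have step : ∀ (g : X → ℝ), Measurable g → ∀ B : ℝ, (∀ x, |g x| ≤ B) →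
      ∀ K : ℝ, 0 ≤ K → (∀ x y, |g x - g y| ≤ K * ψt x y) →
      ∀ x y : X, |(∫ z, g z ∂(P x)) - (∫ z, g z ∂(P y))| ≤ (ρ * K) * ψt x y := by
    intro g hgm B hgB K hK hlip x y
    have main : ∀ ε : ℝ, 0 < ε →
        |(∫ z, g z ∂(P x)) - (∫ z, g z ∂(P y))| ≤ K * (ρ * ψt x y + ε) := by
      intro ε hε
      obtain ⟨υ, hpυ, hcυ, hint⟩ := key x y ε hε
      haveI := hpυ
      rw [integral_sub_of_isCoupling hcυ hgm hgB]
      have hhm : Measurable (fun p : X × X => g p.1 - g p.2) :=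
        (hgm.comp measurable_fst).sub (hgm.comp measurable_snd)
      have hhint : Integrable (fun p : X × X => g p.1 - g p.2) υ := by
        refine (integrable_const (2*B)).mono' hhm.aestronglyMeasurable ?_
        refine ae_of_all _ fun p => ?_
        rw [Real.norm_eq_abs]
        calc |g p.1 - g p.2| ≤ |g p.1| + |g p.2| := abs_sub _ _
          _ ≤ 2 * B := by linarith [hgB p.1, hgB p.2]
      have habs0 : 0 ≤ ∫ p, |g p.1 - g p.2| ∂υ := integral_nonneg fun p => abs_nonneg _
      calc |∫ p, (g p.1 - g p.2) ∂υ| ≤ ∫ p, |g p.1 - g p.2| ∂υ := by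
            simpa [Real.norm_eq_abs] using
              norm_integral_le_integral_norm (μ := υ) (fun p : X × X => g p.1 - g p.2)
        _ = (∫⁻ p, ENNReal.ofReal |g p.1 - g p.2| ∂υ).toReal := by
            rw [← ofReal_integral_eq_lintegral_ofReal hhint.abs
              (ae_of_all _ fun p => abs_nonneg _), ENNReal.toReal_ofReal habs0]
        _ ≤ (ENNReal.ofReal K * ENNReal.ofReal (ρ * ψt x y + ε)).toReal := by
            refine ENNReal.toReal_mono
              (ENNReal.mul_ne_top ENNReal.ofReal_ne_top ENNReal.ofReal_ne_top) ?_
            calc ∫⁻ p, ENNReal.ofReal |g p.1 - g p.2| ∂υ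
                ≤ ∫⁻ p, ENNReal.ofReal (K * ψt p.1 p.2) ∂υ :=
                  lintegral_mono fun p => ENNReal.ofReal_le_ofReal (hlip p.1 p.2)
              _ = ENNReal.ofReal K * ∫⁻ p, ENNReal.ofReal (ψt p.1 p.2) ∂υ := by
                  simp_rw [ENNReal.ofReal_mul hK]
                  rw [lintegral_const_mul _ hψtmeas.ennreal_ofReal]
              _ ≤ ENNReal.ofReal K * ENNReal.ofReal (ρ * ψt x y + ε) :=
                  mul_le_mul_right hint _
        _ = K * (ρ * ψt x y + ε) := by
            rw [← ENNReal.ofReal_mul hK, ENNReal.toReal_ofReal]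
            have := hψt0 x y
            nlinarith [mul_nonneg hρ0 (hψt0 x y)]
    refine le_of_forall_pos_le_add fun ε' hε' => ?_
    have h := main (ε' / (K + 1)) (by positivity)
    have h2 : K * (ε' / (K + 1)) ≤ ε' := by
      have h3 : K * (ε' / (K + 1)) ≤ (K + 1) * (ε' / (K + 1)) :=
        mul_le_mul_of_nonneg_right (by linarith) (by positivity)
      rwa [mul_div_cancel₀ _ (by linarith : K + 1 ≠ 0)] at h3
    calc |(∫ z, g z ∂(P x)) - (∫ z, g z ∂(P y))| ≤ K * (ρ * ψt x y + ε' / (K + 1)) := h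
      _ = (ρ * K) * ψt x y + K * (ε' / (K + 1)) := by ring
      _ ≤ (ρ * K) * ψt x y + ε' := by linarith

  -- equality of integrals of ψt-Lipschitz bounded functions
  have Ieq : ∀ (f : X → ℝ), Measurable f → ∀ B : ℝ, 0 ≤ B → (∀ x, |f x| ≤ B) →
      ∀ C : ℝ, 0 ≤ C → (∀ x y, |f x - f y| ≤ C * ψt x y) →
      ∫ x, f x ∂π₁ = ∫ x, f x ∂π₂ := by
    intro f hfm B hB0 hfB C hC0 hflip
    let g : ℕ → X → ℝ := fun n => Nat.rec f (fun _ gn x => ∫ z, gn z ∂(P x)) n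
    have hgs : ∀ n, g (n+1) = fun x => ∫ z, g n z ∂(P x) := fun n => rfl
    have hinv : ∀ n, Measurable (g n) ∧ (∀ x, |g n x| ≤ B) ∧
        (∀ x y, |g n x - g n y| ≤ (ρ ^ n * C) * ψt x y) := by
      intro n
      induction n with
      | zero =>
        refine ⟨hfm, hfB, ?_⟩
        intro x y; rw [pow_zero, one_mul]; exact hflip x y
      | succ n ih =>
        obtain ⟨hm, hb, hl⟩ := ih
        have hm' : Measurable (g (n+1)) := by
          rw [hgs n]
          exact (StronglyMeasurable.integral_kernel_prod_right
            (f := fun _ y => g n y) (hm.comp measurable_snd).stronglyMeasurable).measurable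
        have hb' : ∀ x, |g (n+1) x| ≤ B := by
          intro x
          rw [hgs n]
          simp only []
          calc |∫ z, g n z ∂(P x)| ≤ ∫ z, |g n z| ∂(P x) := by
                simpa [Real.norm_eq_abs] using norm_integral_le_integral_norm (μ := P x) (g n)
            _ ≤ ∫ _, B ∂(P x) := integral_mono (integrable_of_bounded hm hb).abs
                (integrable_const B) (fun z => hb z)
            _ = B := by simp
        refine ⟨hm', hb', ?_⟩
        intro x y
        have hstep := step (g n) hm B hb (ρ ^ n * C)
          (mul_nonneg (pow_nonneg hρ0 n) hC0) hl x y
        have h2 : |(∫ z, g n z ∂(P x)) - (∫ z, g n z ∂(P y))| ≤ (ρ ^ (n+1) * C) * ψt x y := by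
          calc |(∫ z, g n z ∂(P x)) - (∫ z, g n z ∂(P y))|
              ≤ (ρ * (ρ ^ n * C)) * ψt x y := hstep
            _ = (ρ ^ (n+1) * C) * ψt x y := by ring
        exact h2
    have hstat : ∀ (π : Measure X), IsProbabilityMeasure π → π.bind (fun x => P x) = π →
        ∀ n, ∫ x, g n x ∂π = ∫ x, f x ∂π := by
      intro π hπ hsπ n
      induction n with
      | zero => rfl
      | succ n ih =>
        have hbind := integral_bind_of_bounded π P (g n) (hinv n).1 B (hinv n).2.1
        rw [hsπ] at hbind
        have he : ∫ x, g (n+1) x ∂π = ∫ x, g n x ∂π := by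
          simp only [hgs n]
          exact hbind.symm
        rw [he, ih]
    haveI : IsProbabilityMeasure (π₁.prod π₂) := by infer_instance
    have hfinal : ∀ n : ℕ, |(∫ x, f x ∂π₁) - (∫ x, f x ∂π₂)| ≤
        ∫ p, min (2*B) ((ρ ^ n * C) * ψt p.1 p.2) ∂(π₁.prod π₂) := by
      intro n
      rw [← hstat π₁ hπ₁ hs₁ n, ← hstat π₂ hπ₂ hs₂ n]
      have hc := isCoupling_prod π₁ π₂
      rw [integral_sub_of_isCoupling hc (hinv n).1 (hinv n).2.1]
      have hFm : Measurable (fun p : X × X => min (2*B) ((ρ ^ n * C) * ψt p.1 p.2)) :=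
        measurable_const.min (hψtmeas.const_mul _)
      have hhm : Measurable (fun p : X × X => g n p.1 - g n p.2) :=
        ((hinv n).1.comp measurable_fst).sub ((hinv n).1.comp measurable_snd)
      have habs : Integrable (fun p : X × X => g n p.1 - g n p.2) (π₁.prod π₂) := by
        refine (integrable_const (2*B)).mono' hhm.aestronglyMeasurable ?_
        refine ae_of_all _ fun p => ?_
        rw [Real.norm_eq_abs]
        calc |g n p.1 - g n p.2| ≤ |g n p.1| + |g n p.2| := abs_sub _ _
          _ ≤ 2 * B := by linarith [(hinv n).2.1 p.1, (hinv n).2.1 p.2]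
      calc |∫ p, (g n p.1 - g n p.2) ∂(π₁.prod π₂)|
          ≤ ∫ p, |g n p.1 - g n p.2| ∂(π₁.prod π₂) := by
            simpa [Real.norm_eq_abs] using norm_integral_le_integral_norm (μ := π₁.prod π₂)
              (fun p : X × X => g n p.1 - g n p.2)
        _ ≤ ∫ p, min (2*B) ((ρ ^ n * C) * ψt p.1 p.2) ∂(π₁.prod π₂) := by
            refine integral_mono habs.abs ?_ ?_
            · refine integrable_of_bounded hFm (B := 2*B) fun p => ?_
              rw [abs_of_nonneg (le_min (by linarith)
                (mul_nonneg (mul_nonneg (pow_nonneg hρ0 n) hC0) (hψt0 p.1 p.2)))]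
              exact min_le_left _ _
            · intro p
              exact le_min (by
                calc |g n p.1 - g n p.2| ≤ |g n p.1| + |g n p.2| := abs_sub _ _
                  _ ≤ 2 * B := by linarith [(hinv n).2.1 p.1, (hinv n).2.1 p.2])
                ((hinv n).2.2 p.1 p.2)
    have hlim : Tendsto (fun n => ∫ p, min (2*B) ((ρ ^ n * C) * ψt p.1 p.2) ∂(π₁.prod π₂))
        atTop (nhds 0) := by
      have h0 : (0:ℝ) = ∫ _p : X × X, (0:ℝ) ∂(π₁.prod π₂) := by simp
      rw [h0]
      apply tendsto_integral_of_dominated_convergence (bound := fun _ => 2*B)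
      · intro n
        exact (measurable_const.min (hψtmeas.const_mul _)).aestronglyMeasurable
      · exact integrable_const _
      · intro n
        refine ae_of_all _ fun p => ?_
        rw [Real.norm_eq_abs, abs_of_nonneg (le_min (by linarith)
          (mul_nonneg (mul_nonneg (pow_nonneg hρ0 n) hC0) (hψt0 p.1 p.2)))]
        exact min_le_left _ _
      · refine ae_of_all _ fun p => ?_
        have h1 : Tendsto (fun n : ℕ => (ρ ^ n * C) * ψt p.1 p.2) atTop (nhds 0) := by
          have h2 := (tendsto_pow_atTop_nhds_zero_of_lt_one hρ0 hρ1).mul_const (C * ψt p.1 p.2)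
          rw [zero_mul] at h2
          refine h2.congr fun n => by ring
        have h2 : Tendsto (fun n : ℕ => min (2*B) ((ρ ^ n * C) * ψt p.1 p.2)) atTop
            (nhds (min (2*B) 0)) := tendsto_const_nhds.min h1
        rwa [min_eq_right (by linarith : (0:ℝ) ≤ 2*B)] at h2
    have hle : |(∫ x, f x ∂π₁) - (∫ x, f x ∂π₂)| ≤ 0 :=
      ge_of_tendsto hlim (Eventually.of_forall hfinal)
    have heq0 : |(∫ x, f x ∂π₁) - (∫ x, f x ∂π₂)| = 0 := le_antisymm hle (abs_nonneg _)
    exact sub_eq_zero.mp (abs_eq_zero.mp heq0)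

  -- equality on closed sets
  have hclosed : ∀ F : Set X, IsClosed F → π₁ F = π₂ F := by
    intro F hF
    rcases Set.eq_empty_or_nonempty F with hFe | hFne
    · simp [hFe]
    set fn : ℕ → X → ℝ := fun n x => max (1 - Metric.infDist x F * (n+1)) 0 with hfn
    have hfnm : ∀ n, Measurable (fn n) := fun n =>
      ((continuous_const.sub ((Metric.continuous_infDist_pt F).mul
        continuous_const)).max continuous_const).measurable
    have hfn0 : ∀ n x, 0 ≤ fn n x := fun n x => le_max_right _ _
    have hfn1 : ∀ n x, fn n x ≤ 1 := by
      intro n x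
      apply max_le ?_ zero_le_one
      have h1 : 0 ≤ Metric.infDist x F * (n+1) :=
        mul_nonneg Metric.infDist_nonneg (by positivity)
      linarith
    have hfnB : ∀ n x, |fn n x| ≤ 1 := fun n x => abs_le.mpr ⟨by linarith [hfn0 n x], hfn1 n x⟩
    have hfnlip : ∀ n x y, |fn n x - fn n y| ≤ (max ((n:ℝ)+1) 1) * ψt x y := by
      intro n x y
      have hd : |Metric.infDist x F - Metric.infDist y F| ≤ dist x y := by
        rw [abs_sub_le_iff]
        constructor
        · linarith [Metric.infDist_le_infDist_add_dist (x := x) (y := y) (s := F)]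
        · linarith [Metric.infDist_le_infDist_add_dist (x := y) (y := x) (s := F), dist_comm x y]
      have h1 : |fn n x - fn n y| ≤ ((n:ℝ)+1) * dist x y := by
        calc |fn n x - fn n y|
            ≤ |(1 - Metric.infDist x F * (n+1)) - (1 - Metric.infDist y F * (n+1))| :=
              abs_max_sub_max_le_abs _ _ _
          _ = ((n:ℝ)+1) * |Metric.infDist x F - Metric.infDist y F| := by
              have he : (1 - Metric.infDist x F * ((n:ℝ)+1)) -
                  (1 - Metric.infDist y F * ((n:ℝ)+1))
                  = ((n:ℝ)+1) * (Metric.infDist y F - Metric.infDist x F) := by ring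
              rw [he, abs_mul, abs_of_nonneg (show (0:ℝ) ≤ (n:ℝ)+1 by positivity),
                abs_sub_comm]
          _ ≤ ((n:ℝ)+1) * dist x y := mul_le_mul_of_nonneg_left hd (by positivity)
      have h2 : |fn n x - fn n y| ≤ 1 := by
        rw [abs_sub_le_iff]
        constructor
        · linarith [hfn1 n x, hfn0 n y]
        · linarith [hfn1 n y, hfn0 n x]
      calc |fn n x - fn n y| ≤ min (((n:ℝ)+1) * dist x y) 1 := le_min h1 h2
        _ ≤ max ((n:ℝ)+1) 1 * min (dist x y) 1 := min_mul_le_max_mul_min dist_nonneg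
        _ ≤ max ((n:ℝ)+1) 1 * ψt x y := by
            refine mul_le_mul_of_nonneg_left (hmin_le x y) ?_
            exact le_trans zero_le_one (le_max_right _ _)
    have hIeq : ∀ n, ∫ x, fn n x ∂π₁ = ∫ x, fn n x ∂π₂ := fun n =>
      Ieq (fn n) (hfnm n) 1 zero_le_one (hfnB n) (max ((n:ℝ)+1) 1)
        (le_trans zero_le_one (le_max_right _ _)) (hfnlip n)
    have hptw : ∀ x : X, Tendsto (fun n : ℕ => fn n x) atTop
        (nhds (Set.indicator F (fun _ => (1:ℝ)) x)) := by
      intro x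
      by_cases hx : x ∈ F
      · have he : ∀ n : ℕ, fn n x = 1 := by
          intro n
          simp only [hfn, Metric.infDist_zero_of_mem hx, zero_mul, sub_zero]
          exact max_eq_left zero_le_one
        rw [Set.indicator_of_mem hx]
        simp only [he]
        exact tendsto_const_nhds
      · have hpos : 0 < Metric.infDist x F := (hF.notMem_iff_infDist_pos hFne).mp hx
        rw [Set.indicator_of_notMem hx]
        obtain ⟨N, hN⟩ := exists_nat_ge (1 / Metric.infDist x F)
        apply tendsto_atTop_of_eventually_const (i₀ := N)
        intro n hn
        have hle : 1 / Metric.infDist x F ≤ (n:ℝ) + 1 := by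
          refine le_trans hN ?_
          have : (N:ℝ) ≤ (n:ℝ) := by exact_mod_cast hn
          linarith
        have h1 : (1:ℝ) ≤ Metric.infDist x F * ((n:ℝ)+1) := by
          rw [div_le_iff₀ hpos] at hle
          linarith [hle]
        simp only [hfn]
        rw [max_eq_right]
        push_cast
        linarith
    have hdom : ∀ (π : Measure X), IsProbabilityMeasure π →
        Tendsto (fun n => ∫ x, fn n x ∂π) atTop
          (nhds (∫ x, Set.indicator F (fun _ => (1:ℝ)) x ∂π)) := by
      intro π hπ
      apply tendsto_integral_of_dominated_convergence (bound := fun _ => 1)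
      · intro n; exact (hfnm n).aestronglyMeasurable
      · exact integrable_const _
      · intro n; exact ae_of_all _ fun x => by rw [Real.norm_eq_abs]; exact hfnB n x
      · exact ae_of_all _ hptw
    have hind : ∀ (π : Measure X), ∫ x, Set.indicator F (fun _ => (1:ℝ)) x ∂π =
        (π F).toReal := by
      intro π
      rw [integral_indicator_const (1:ℝ) hF.measurableSet]
      simp [Measure.real]
    have t1 := hdom π₁ hπ₁
    have t2 := hdom π₂ hπ₂
    rw [hind π₁] at t1
    rw [hind π₂] at t2
    have h12 : (π₁ F).toReal = (π₂ F).toReal :=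
      tendsto_nhds_unique (t1.congr fun n => hIeq n) t2
    exact (ENNReal.toReal_eq_toReal_iff' (measure_ne_top π₁ F) (measure_ne_top π₂ F)).mp h12

  -- conclude
  apply ext_of_generate_finite {s : Set X | IsClosed s} ?_ isPiSystem_isClosed
  · exact fun F hF => hclosed F hF
  · exact hclosed Set.univ isClosed_univ
  · rw [BorelSpace.measurable_eq (α := X), borel_eq_generateFrom_isClosed]
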